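/- Let n ≥ 1 and let S be a real symmetric n×n matrix with S² = 1ₙ. Define 𝔫 = 𝔫₋₁ ⊕ 𝔫₋₂ with 𝔫₋₁ = ℍⁿ (quaternionic row vectors) and 𝔫₋₂ = Im ℍ (purely imaginary quaternions), with bracket ⁅x,y⁆ = ySx* − xSy* for x, y ∈ 𝔫₋₁ (x* the quaternionic conjugate transpose) and ⁅𝔫₋₁,𝔫₋₂⁆ = ⁅𝔫₋₂,𝔫₋₂⁆ = 0, and symmetric bilinear form ⟨x|y⟩ = 2Re(xSy*) for x, y ∈ 𝔫₋₁, ⟨z|w⟩ = Re(z·conj(w)) for z, w ∈ 𝔫₋₂, and ⟨𝔫₋₁|𝔫₋₂⟩ = 0. Then 𝔫 is a 2-step nilpotent Lie algebra whose center is exactly 𝔫₋₂, ⟨·|·⟩ is non-degenerate, and (𝔫, ⟨·|·⟩) is a pseudo H-type Lie algebra (this is the pseudo Div H-type Lie algebra of the first class 𝔥⁽¹⁾(ℍ,S)). -/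

import Mathlib

open scoped Quaternion

noncomputable section

/-- `xSy*` for quaternionic row vectors `x, y` and a real matrix `S`. -/
def qf {n : ℕ} (S : Matrix (Fin n) (Fin n) ℝ) (x y : Fin n → ℍ[ℝ]) : ℍ[ℝ] :=
  ∑ i, ∑ j, S i j • (x i * star (y j))

/-- The bracket of `𝔥⁽¹⁾(ℍ, S)`: `⁅x, y⁆ = ySx* - xSy*` (valued in the second
component); the second components do not contribute. -/
def brq {n : ℕ} (S : Matrix (Fin n) (Fin n) ℝ) (a b : (Fin n → ℍ[ℝ]) × ℍ[ℝ]) :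
    (Fin n → ℍ[ℝ]) × ℍ[ℝ] :=
  (0, qf S b.1 a.1 - qf S a.1 b.1)

/-- The scalar product of `𝔥⁽¹⁾(ℍ, S)`: `2Re(xSy*)` on `𝔫₋₁ = ℍⁿ`,
`Re(z·conj w)` on `𝔫₋₂ = Im ℍ`, the two parts being orthogonal. -/
def Bq {n : ℕ} (S : Matrix (Fin n) (Fin n) ℝ) (a b : (Fin n → ℍ[ℝ]) × ℍ[ℝ]) : ℝ :=
  2 * (qf S a.1 b.1).re + (a.2 * star b.2).re

/-- The carrier `𝔫 = 𝔫₋₁ ⊕ 𝔫₋₂ = ℍⁿ ⊕ Im ℍ`. -/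
def Nq (n : ℕ) : Set ((Fin n → ℍ[ℝ]) × ℍ[ℝ]) := {a | a.2.re = 0}

/-- `𝔫₋₁ = ℍⁿ`. -/
def N1q (n : ℕ) : Set ((Fin n → ℍ[ℝ]) × ℍ[ℝ]) := {a | a.2 = 0}

/-- `𝔫₋₂ = Im ℍ`. -/
def N2q (n : ℕ) : Set ((Fin n → ℍ[ℝ]) × ℍ[ℝ]) := {a | a.1 = 0 ∧ a.2.re = 0}

open Quaternion Finset

section Helpers

variable {n : ℕ} (S : Matrix (Fin n) (Fin n) ℝ)

lemma qf_zero_left (y : Fin n → ℍ[ℝ]) : qf S 0 y = 0 := by simp [qf]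
lemma qf_zero_right (x : Fin n → ℍ[ℝ]) : qf S x 0 = 0 := by simp [qf]

lemma qf_add_left (x x' y : Fin n → ℍ[ℝ]) : qf S (x + x') y = qf S x y + qf S x' y := by
  simp [qf, add_mul, smul_add, Finset.sum_add_distrib]

lemma qf_add_right (x y y' : Fin n → ℍ[ℝ]) : qf S x (y + y') = qf S x y + qf S x y' := by
  simp [qf, mul_add, smul_add, Finset.sum_add_distrib]

lemma qf_smul_left (c : ℝ) (x y : Fin n → ℍ[ℝ]) : qf S (c • x) y = c • qf S x y := by
  simp [qf, Finset.smul_sum, smul_comm c]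

lemma qf_smul_right (c : ℝ) (x y : Fin n → ℍ[ℝ]) : qf S x (c • y) = c • qf S x y := by
  simp [qf, Finset.smul_sum, mul_smul_comm, smul_comm c]

lemma star_qf (hS : S.transpose = S) (x y : Fin n → ℍ[ℝ]) : star (qf S x y) = qf S y x := by
  unfold qf
  rw [star_sum, Finset.sum_comm]
  refine Finset.sum_congr rfl fun j _ => ?_
  rw [star_sum]
  refine Finset.sum_congr rfl fun i _ => ?_
  have h : S j i = S i j := by
    rw [← congrFun (congrFun hS i) j, Matrix.transpose_apply]
  simp [star_mul, h]

lemma qf_mul_left (c : ℍ[ℝ]) (x y : Fin n → ℍ[ℝ]) :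
    qf S (fun i => c * x i) y = c * qf S x y := by
  simp [qf, Finset.mul_sum, mul_smul_comm, mul_assoc]

lemma qf_mul_right (c : ℍ[ℝ]) (x y : Fin n → ℍ[ℝ]) :
    qf S x (fun j => c * y j) = qf S x y * star c := by
  simp [qf, Finset.sum_mul, smul_mul_assoc, star_mul, mul_assoc]

lemma qf_dual (hS2 : S * S = 1) (x : Fin n → ℍ[ℝ]) :
    qf S x (fun j => ∑ k, S j k • x k) = ((∑ i, normSq (x i) : ℝ) : ℍ[ℝ]) := by
  have h1 : ∀ i k : Fin n, (∑ j, S i j * S j k) = if i = k then 1 else 0 := fun i k => by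
    have := congrFun (congrFun hS2 i) k
    simpa [Matrix.mul_apply, Matrix.one_apply] using this
  have step : ∀ i, (∑ j, S i j • (x i * star (∑ k, S j k • x k)))
      = ∑ k, (∑ j, S i j * S j k) • (x i * star (x k)) := by
    intro i
    have h2 : ∀ j, S i j • (x i * star (∑ k, S j k • x k))
        = ∑ k, (S i j * S j k) • (x i * star (x k)) := by
      intro j
      rw [star_sum, Finset.mul_sum, Finset.smul_sum]
      refine Finset.sum_congr rfl fun k _ => ?_
      rw [show star (S j k • x k) = S j k • star (x k) from by simp,
          mul_smul_comm, smul_smul]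
    rw [Finset.sum_congr rfl fun j _ => h2 j, Finset.sum_comm]
    exact Finset.sum_congr rfl fun k _ => (Finset.sum_smul).symm
  unfold qf
  rw [Finset.sum_congr rfl fun i _ => step i]
  simp only [h1, ite_smul, one_smul, zero_smul, Finset.sum_ite_eq, Finset.mem_univ, if_true]
  simp only [Quaternion.self_mul_star]
  exact (map_sum (algebraMap ℝ ℍ[ℝ]) _ _).symm

lemma re_mul_star_comm (a b : ℍ[ℝ]) : (a * star b).re = (b * star a).re := by
  simp [Quaternion.re_mul]; ring

lemma re_mul_star_of_im (z q : ℍ[ℝ]) (hz : z.re = 0) : (z * star q).re = -(z * q).re := by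
  simp [Quaternion.re_mul, hz]; ring

lemma star_of_im (z : ℍ[ℝ]) (hz : z.re = 0) : star z = -z := by
  ext <;> simp [hz]

lemma sq_of_im (z : ℍ[ℝ]) (hz : z.re = 0) : z * z = -((normSq z : ℝ) : ℍ[ℝ]) := by
  have h : z * z = -(z * star z) := by rw [star_of_im z hz, mul_neg, neg_neg]
  rw [h, Quaternion.self_mul_star]

def qi : ℍ[ℝ] := ⟨0, 1, 0, 0⟩
@[simp] lemma qi_re : qi.re = 0 := rfl
@[simp] lemma qi_imI : qi.imI = 1 := rfl
@[simp] lemma qi_imJ : qi.imJ = 0 := rfl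
@[simp] lemma qi_imK : qi.imK = 0 := rfl

lemma key1 (hSsymm : S.transpose = S) (hS2 : S * S = 1) (x : Fin n → ℍ[ℝ]) :
    (qf S (fun j => ∑ k, S j k • (qi * x k)) x
      - qf S x (fun j => ∑ k, S j k • (qi * x k))).imI = 2 * ∑ i, normSq (x i) := by
  have hy : (fun j => ∑ k, S j k • (qi * x k))
      = fun j => qi * (∑ k, S j k • x k) := by
    funext j; rw [Finset.mul_sum]
    exact Finset.sum_congr rfl fun k _ => (mul_smul_comm _ _ _).symm
  rw [hy, qf_mul_left, qf_mul_right, ← star_qf S hSsymm, qf_dual S hS2]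
  simp [Quaternion.imI_mul, Quaternion.re_coe, Quaternion.imI_coe, Quaternion.imJ_coe,
    Quaternion.imK_coe]
  ring

end Helpers

theorem stmt5 (n : ℕ) (hn : 1 ≤ n) (S : Matrix (Fin n) (Fin n) ℝ)
    (hSsymm : S.transpose = S) (hS2 : S * S = 1) :
    -- the bracket takes values in 𝔫₋₂ = Im ℍ
    (∀ a b, brq S a b ∈ N2q n) ∧
    -- the bracket is ℝ-bilinear and antisymmetric
    (∀ a a' b, brq S (a + a') b = brq S a b + brq S a' b) ∧
    (∀ (c : ℝ) (a b), brq S (c • a) b = c • brq S a b) ∧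
    (∀ a b, brq S a b = -brq S b a) ∧
    -- 𝔫 is 2-step nilpotent: ⁅𝔫,𝔫⁆ ≠ 0 and ⁅𝔫,⁅𝔫,𝔫⁆⁆ = 0 (hence Jacobi holds)
    (∃ a ∈ Nq n, ∃ b ∈ Nq n, brq S a b ≠ 0) ∧
    (∀ a b c, brq S a (brq S b c) = 0) ∧
    -- the center of 𝔫 is exactly 𝔫₋₂
    (∀ a ∈ Nq n, ((∀ b ∈ Nq n, brq S a b = 0) ↔ a ∈ N2q n)) ∧
    -- the scalar product is symmetric and non-degenerate on 𝔫
    (∀ a ∈ Nq n, ∀ b ∈ Nq n, Bq S a b = Bq S b a) ∧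
    (∀ a ∈ Nq n, (∀ b ∈ Nq n, Bq S a b = 0) → a = 0) ∧
    -- its restriction to the center is non-degenerate
    (∀ z ∈ N2q n, (∀ w ∈ N2q n, Bq S z w = 0) → z = 0) ∧
    -- 𝔫₋₁ is the orthogonal complement of the center in 𝔫
    (∀ a ∈ Nq n, (a ∈ N1q n ↔ ∀ z ∈ N2q n, Bq S a z = 0)) ∧
    -- pseudo H-type: the maps J_z satisfy the Clifford condition
    (∃ J : ((Fin n → ℍ[ℝ]) × ℍ[ℝ]) → ((Fin n → ℍ[ℝ]) × ℍ[ℝ]) →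
        ((Fin n → ℍ[ℝ]) × ℍ[ℝ]),
      ∀ z ∈ N2q n, ∀ x ∈ N1q n,
        J z x ∈ N1q n ∧
        (∀ y ∈ N1q n, Bq S (J z x) y = Bq S z (brq S x y)) ∧
        J z (J z x) = (-(Bq S z z)) • x) := by
  have hre : ∀ x y : Fin n → ℍ[ℝ], (qf S x y).re = (qf S y x).re := by
    intro x y
    rw [← star_qf S hSsymm x y, Quaternion.re_star]
  refine ⟨?_, ?_, ?_, ?_, ?_, ?_, ?_, ?_, ?_, ?_, ?_, ?_⟩
  · -- values in N2q
    intro a b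
    exact ⟨rfl, by simp [brq, ← star_qf S hSsymm a.1 b.1]⟩
  · -- additivity
    intro a a' b
    have h1 : (a + a').1 = a.1 + a'.1 := rfl
    simp [brq, Prod.ext_iff, h1, qf_add_left, qf_add_right]
    abel
  · -- homogeneity
    intro c a b
    have h1 : (c • a).1 = c • a.1 := rfl
    simp [brq, Prod.ext_iff, h1, qf_smul_left, qf_smul_right, smul_sub]
  · -- antisymmetry
    intro a b
    simp [brq, Prod.ext_iff]
  · -- nonzero bracket
    set x : Fin n → ℍ[ℝ] := fun _ => 1 with hx
    refine ⟨(x, 0), rfl, ((fun j => ∑ k, S j k • (qi * x k)), 0), rfl, fun h => ?_⟩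
    have h2 := congrArg (fun p : (Fin n → ℍ[ℝ]) × ℍ[ℝ] => p.2.imI) h
    simp only [brq] at h2
    rw [key1 S hSsymm hS2 x] at h2
    simp [hx, Finset.sum_const, Finset.card_univ] at h2
    omega
  · -- 2-step nilpotent
    intro a b c
    have h1 : (brq S b c).1 = 0 := rfl
    simp [brq, h1, qf_zero_left, qf_zero_right, Prod.ext_iff]
  · -- center
    intro a ha
    constructor
    · intro h
      refine ⟨?_, ha⟩
      have hb := h ((fun j => ∑ k, S j k • (qi * a.1 k)), 0) rfl
      have h2 := congrArg (fun p : (Fin n → ℍ[ℝ]) × ℍ[ℝ] => p.2.imI) hb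
      simp only [brq] at h2
      rw [key1 S hSsymm hS2 a.1] at h2
      simp at h2
      have hsum : ∑ i, normSq (a.1 i) = 0 := h2
      funext i
      have hnn : ∀ i ∈ Finset.univ, (0:ℝ) ≤ normSq (a.1 i) := fun i _ => normSq_nonneg
      have := (Finset.sum_eq_zero_iff_of_nonneg hnn).1 hsum i (Finset.mem_univ i)
      exact normSq_eq_zero.1 this
    · intro h2 b hb
      simp [brq, h2.1, qf_zero_left, qf_zero_right, Prod.ext_iff]
  · -- symmetry
    intro a _ b _
    rw [Bq, Bq, hre a.1 b.1, re_mul_star_comm]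
  · -- nondegeneracy on 𝔫
    intro a ha h
    have h1 := h ((fun j => ∑ k, S j k • a.1 k), 0) rfl
    rw [Bq, qf_dual S hS2 a.1] at h1
    simp at h1
    have ha1 : a.1 = 0 := by
      funext i
      have hnn : ∀ i ∈ Finset.univ, (0:ℝ) ≤ normSq (a.1 i) := fun i _ => normSq_nonneg
      have := (Finset.sum_eq_zero_iff_of_nonneg hnn).1 h1 i (Finset.mem_univ i)
      exact normSq_eq_zero.1 this
    have h2 := h (0, a.2) (show ((0 : Fin n → ℍ[ℝ]), a.2).2.re = 0 from ha)
    rw [Bq] at h2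
    simp only [qf_zero_right, Quaternion.self_mul_star] at h2
    simp at h2
    have ha2 : a.2 = 0 := h2
    rw [Prod.ext_iff]
    exact ⟨ha1, ha2⟩
  · -- nondegeneracy on center
    intro z hz h
    obtain ⟨hz1, hz2⟩ := hz
    have h2 := h (0, z.2) ⟨rfl, hz2⟩
    rw [Bq, hz1] at h2
    simp only [qf_zero_left, Quaternion.self_mul_star] at h2
    simp at h2
    rw [Prod.ext_iff]
    exact ⟨hz1, h2⟩
  · -- orthogonal complement
    intro a ha
    constructor
    · intro h1 z hz
      rw [Bq, hz.1, qf_zero_right, h1]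
      simp
    · intro hv
      have h2 := hv (0, a.2) ⟨rfl, ha⟩
      rw [Bq] at h2
      simp only [qf_zero_right, Quaternion.self_mul_star] at h2
      simp at h2
      exact h2
  · -- J and Clifford condition
    refine ⟨fun z a => ((fun i => z.2 * a.1 i), 0), ?_⟩
    intro z hz x hx
    obtain ⟨hz1, hz2⟩ := hz
    have hx2 : x.2 = 0 := hx
    refine ⟨rfl, ?_, ?_⟩
    · intro y hy
      set q := qf S x.1 y.1 with hq
      have e1 : Bq S ((fun i => z.2 * x.1 i), (0:ℍ[ℝ])) y = 2 * (z.2 * q).re := by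
        rw [Bq]
        simp [qf_mul_left, hq]
      have e2 : Bq S z (brq S x y) = 2 * (z.2 * q).re := by
        have hb1 : (brq S x y).1 = 0 := rfl
        have hb2 : (brq S x y).2 = star q - q := by
          simp [brq, star_qf S hSsymm x.1 y.1, hq]
        rw [Bq, hb1, hb2, qf_zero_right, star_sub, star_star]
        have h3 := re_mul_star_of_im z.2 q hz2
        simp only [mul_sub, Quaternion.re_sub, h3]
        simp
        ring
      exact e1.trans e2.symm
    · have ht : Bq S z z = normSq z.2 := by
        rw [Bq, hz1, qf_zero_left, Quaternion.self_mul_star]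
        simp
      rw [Prod.ext_iff]
      constructor
      · funext i
        show z.2 * (z.2 * x.1 i) = (-(Bq S z z)) • x.1 i
        rw [← mul_assoc, sq_of_im z.2 hz2, ht, neg_mul, neg_smul,
          Quaternion.coe_mul_eq_smul]
      · show (0:ℍ[ℝ]) = (-(Bq S z z)) • x.2
        rw [hx2, smul_zero]
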